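/- Let P, Q ∈ ℤ with P·Q ≠ 0 and let p be a prime with p ∣ P and p ∣ Q. Set a = ν_p(P) and b = ν_p(Q), suppose b = 2a, and let r ≥ 1 be an integer. Write P = p^a·P' and Q = p^b·Q' with p ∤ P'·Q', let U' be the Lucas sequence with parameters (P',Q'), let ρ' be the least n ≥ 1 with p ∣ U'(n). Then S = L(P,Q,p^{−r}) is a numerical semigroup and either s(S) = ∅ or gcd s(S) ≥ 2; more precisely, if p ≥ 3 then ρ' (which is ≥ 2) divides every element of s(S), and if p = 2 then 3 divides every element of s(S). -/

import Mathlib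

/-- The Lucas sequence `U_n(P,Q)`: `U_0 = 0`, `U_1 = 1`,
`U_{n+2} = P·U_{n+1} − Q·U_n`. -/
def lucasU (P Q : ℤ) : ℕ → ℤ
  | 0 => 0
  | 1 => 1
  | n + 2 => P * lucasU P Q (n + 1) - Q * lucasU P Q n

/-- The Lucas semigroup `L(P,Q,R) = {n ∈ ℕ : U_n(P,Q)·R ∈ ℤ}`. -/
def lucasSG (P Q : ℤ) (R : ℚ) : Set ℕ :=
  {n : ℕ | ∃ k : ℤ, (lucasU P Q n : ℚ) * R = (k : ℚ)}

/-- The local Lucas semigroup `L(P,Q,p^{-r}) = {n ∈ ℕ : ν_p(U_n) ≥ r}`,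
equivalently the set of `n` with `U_n · p^{-r} ∈ ℤ`. -/
def localLucasSG (P Q : ℤ) (p : ℕ) (r : ℤ) : Set ℕ :=
  lucasSG P Q ((p : ℚ) ^ (-r))

/-- The Frobenius number of `S ⊆ ℕ`: the largest natural number not in `S`
(for a numerical semigroup, `Sᶜ` is finite and nonempty so `sSup` is it). -/
noncomputable def frobNum (S : Set ℕ) : ℕ := sSup Sᶜ

/-- The set of nonzero small elements `s(S) = {n ∈ S : 0 < n < g(S)}`. -/
def smallElems (S : Set ℕ) : Set ℕ := {n : ℕ | n ∈ S ∧ 0 < n ∧ n < frobNum S}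

lemma lucasU_rec (P Q : ℤ) (n : ℕ) :
    lucasU P Q (n+2) = P * lucasU P Q (n+1) - Q * lucasU P Q n := rfl

lemma lucasU_zero (P Q : ℤ) : lucasU P Q 0 = 0 := rfl
lemma lucasU_one (P Q : ℤ) : lucasU P Q 1 = 1 := rfl
lemma lucasU_two (P Q : ℤ) : lucasU P Q 2 = P := by
  rw [show (2:ℕ) = 0+2 from rfl, lucasU_rec, lucasU_zero, lucasU_one]; ring
lemma lucasU_three (P Q : ℤ) : lucasU P Q 3 = P^2 - Q := by
  rw [show (3:ℕ) = 1+2 from rfl, lucasU_rec, lucasU_two, lucasU_one]; ring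

lemma lucasU_scale (P Q c : ℤ) :
    ∀ n : ℕ, lucasU (c*P) (c^2*Q) (n+1) = c^n * lucasU P Q (n+1) := by
  have key : ∀ n : ℕ, lucasU (c*P) (c^2*Q) (n+1) = c^n * lucasU P Q (n+1) ∧
      lucasU (c*P) (c^2*Q) (n+2) = c^(n+1) * lucasU P Q (n+2) := by
    intro n
    induction n with
    | zero =>
      refine ⟨by simp [lucasU_one], ?_⟩
      rw [show (0:ℕ)+2 = 2 from rfl, lucasU_two, lucasU_two]
      ring
    | succ k ih =>
      refine ⟨ih.2, ?_⟩
      show lucasU (c*P) (c^2*Q) ((k+1)+2) = c^(k+2) * lucasU P Q ((k+1)+2)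
      rw [lucasU_rec (c*P) (c^2*Q) (k+1), lucasU_rec P Q (k+1), ih.1, ih.2]
      ring
  exact fun n => (key n).1

lemma lucasU_add (P Q : ℤ) (m : ℕ) :
    ∀ n : ℕ, lucasU P Q (m+1+n) =
      lucasU P Q (m+1) * lucasU P Q (n+1) - Q * lucasU P Q m * lucasU P Q n := by
  have key : ∀ n : ℕ,
      (lucasU P Q (m+1+n) =
        lucasU P Q (m+1) * lucasU P Q (n+1) - Q * lucasU P Q m * lucasU P Q n) ∧
      (lucasU P Q (m+1+(n+1)) =
        lucasU P Q (m+1) * lucasU P Q (n+2) - Q * lucasU P Q m * lucasU P Q (n+1)) := by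
    intro n
    induction n with
    | zero =>
      constructor
      · simp [lucasU_one, lucasU_zero]
      · show lucasU P Q (m+2) = _
        rw [lucasU_rec P Q m, lucasU_rec P Q 0, lucasU_zero, lucasU_one]
        ring
    | succ k ih =>
      refine ⟨ih.2, ?_⟩
      rw [show m+1+(k+1+1) = (m+1+k)+2 by omega, lucasU_rec P Q (m+1+k),
        show m+1+k+1 = m+1+(k+1) by omega, ih.2, ih.1, lucasU_rec P Q (k+1),
        lucasU_rec P Q k]
      ring
  exact fun n => (key n).1

lemma rank_dvd (P Q : ℤ) (p : ℕ) (hp : p.Prime) (hQ : ¬ (p:ℤ) ∣ Q) (ρ : ℕ)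
    (hρ : IsLeast {n : ℕ | 1 ≤ n ∧ (p : ℤ) ∣ lucasU P Q n} ρ) (hρ2 : 2 ≤ ρ) :
    ∀ n : ℕ, (p : ℤ) ∣ lucasU P Q n → ρ ∣ n := by
  intro n
  induction n using Nat.strong_induction_on with
  | _ n ih =>
    intro hdvd
    rcases Nat.eq_zero_or_pos n with h0 | h1
    · simp [h0]
    by_cases hlt : n < ρ
    · exact absurd (hρ.2 ⟨h1, hdvd⟩) (by omega)
    push_neg at hlt
    obtain ⟨m, rfl⟩ : ∃ m, n = ρ + m := ⟨n - ρ, by omega⟩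
    obtain ⟨s, hs⟩ : ∃ s, ρ = s + 1 := ⟨ρ - 1, by omega⟩
    have hadd := lucasU_add P Q s m
    rw [← hs] at hadd
    have hUρ : (p:ℤ) ∣ lucasU P Q ρ := hρ.1.2
    have hUs : ¬ (p:ℤ) ∣ lucasU P Q s := by
      intro h
      have := hρ.2 ⟨by omega, h⟩
      omega
    have h2 : (p:ℤ) ∣ Q * lucasU P Q s * lucasU P Q m := by
      have he : Q * lucasU P Q s * lucasU P Q m =
          lucasU P Q ρ * lucasU P Q (m+1) - lucasU P Q (ρ+m) := by
        rw [hadd]; ring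
      rw [he]
      exact dvd_sub (hUρ.mul_right _) hdvd
    have hpZ : Prime (p : ℤ) := Nat.prime_iff_prime_int.mp hp
    have h3 : (p:ℤ) ∣ lucasU P Q m := by
      rcases hpZ.dvd_mul.mp h2 with h | h
      · rcases hpZ.dvd_mul.mp h with h' | h'
        · exact absurd h' hQ
        · exact absurd h' hUs
      · exact h
    rcases Nat.eq_zero_or_pos m with hm0 | hm1
    · simp [hm0]
    · have := ih m (by omega) h3
      exact Nat.dvd_add (dvd_refl ρ) this

lemma mem_localLucasSG_iff (P Q : ℤ) (p : ℕ) (hp : 0 < p) (r : ℕ) (n : ℕ) :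
    n ∈ localLucasSG P Q p (r : ℤ) ↔ (p:ℤ)^r ∣ lucasU P Q n := by
  have hp0 : ((p:ℚ))^r ≠ 0 := by positivity
  constructor
  · rintro ⟨k, hk⟩
    refine ⟨k, ?_⟩
    rw [zpow_neg, zpow_natCast] at hk
    have h : (lucasU P Q n : ℚ) = (p:ℚ)^r * k := by
      field_simp at hk
      linarith [hk]
    exact_mod_cast h
  · rintro ⟨k, hk⟩
    refine ⟨k, ?_⟩
    rw [zpow_neg, zpow_natCast]
    have h : (lucasU P Q n : ℚ) = (p:ℚ)^r * k := by exact_mod_cast hk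
    field_simp [h]
    exact h

/-- Special prime, case `b = 2a`: `S = L(P,Q,p^{-r})` is a numerical semigroup
and `s(S) = ∅` or `gcd s(S) ≥ 2`; more precisely, if `p ≥ 3` then `ρ'` (which
is `≥ 2`) divides every nonzero small element of `S`, and if `p = 2` then `3`
divides every nonzero small element of `S`. -/
theorem localLucasSG_special_case_b_eq_two_a_small (P Q P' Q' : ℤ)
    (hPQ : P * Q ≠ 0) (p : ℕ) (hp : p.Prime) (a : ℕ) (ha : 1 ≤ a)
    (hP : P = (p : ℤ) ^ a * P') (hQ : Q = (p : ℤ) ^ (2 * a) * Q')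
    (hreg : ¬ (p : ℤ) ∣ P' * Q') (ρ' : ℕ)
    (hρ : IsLeast {n : ℕ | 1 ≤ n ∧ (p : ℤ) ∣ lucasU P' Q' n} ρ')
    (r : ℕ) (hr : 1 ≤ r) :
    0 ∈ localLucasSG P Q p (r : ℤ) ∧
    (∀ m n : ℕ, m ∈ localLucasSG P Q p (r : ℤ) →
      n ∈ localLucasSG P Q p (r : ℤ) → m + n ∈ localLucasSG P Q p (r : ℤ)) ∧
    (localLucasSG P Q p (r : ℤ))ᶜ.Finite ∧
    2 ≤ ρ' ∧
    (3 ≤ p → ∀ n ∈ smallElems (localLucasSG P Q p (r : ℤ)), ρ' ∣ n) ∧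
    (p = 2 → ∀ n ∈ smallElems (localLucasSG P Q p (r : ℤ)), 3 ∣ n) := by
  have hp0 : 0 < p := hp.pos
  have hpZ : Prime (p : ℤ) := Nat.prime_iff_prime_int.mp hp
  have hmem := mem_localLucasSG_iff P Q p hp0 r
  have hQ' : ¬ (p:ℤ) ∣ Q' := fun h => hreg (h.mul_left P')
  have hP' : ¬ (p:ℤ) ∣ P' := fun h => hreg (h.mul_right Q')
  set c : ℤ := (p:ℤ)^a with hc
  have hQ2 : Q = c^2 * Q' := by rw [hQ, hc, ← pow_mul, mul_comm a 2]
  have hscale : ∀ n : ℕ, lucasU P Q (n+1) = c^n * lucasU P' Q' (n+1) := by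
    intro n; rw [hP, hQ2]; exact lucasU_scale P' Q' c n
  have hρ2 : 2 ≤ ρ' := by
    rcases Nat.lt_or_ge ρ' 2 with h | h
    · have h1 : ρ' = 1 := by have := hρ.1.1; omega
      have hd := hρ.1.2
      rw [h1, lucasU_one] at hd
      exact absurd (isUnit_of_dvd_one hd) hpZ.not_unit
    · exact h
  -- small elements are divisible by ρ'
  have hsmall : ∀ n ∈ smallElems (localLucasSG P Q p (r : ℤ)), ρ' ∣ n := by
    rintro n ⟨hnS, hn0, hng⟩
    refine rank_dvd P' Q' p hp hQ' ρ' hρ hρ2 n ?_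
    by_contra hnd
    obtain ⟨m, rfl⟩ : ∃ m, n = m+1 := ⟨n-1, by omega⟩
    rw [hmem, hscale] at hnS
    have hcop : IsCoprime ((p:ℤ)^r) (lucasU P' Q' (m+1)) :=
      ((hpZ.coprime_iff_not_dvd).mpr hnd).pow_left
    have hdvd : (p:ℤ)^r ∣ c^m := hcop.dvd_of_dvd_mul_right hnS
    have hram : r ≤ a*m := by
      rw [hc, ← pow_mul] at hdvd
      have hnat : (p:ℕ)^r ∣ p^(a*m) := by exact_mod_cast hdvd
      exact (Nat.pow_dvd_pow_iff_le_right hp.one_lt).mp hnat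
    have hallge : ∀ k, m+1 ≤ k → k ∈ localLucasSG P Q p (r : ℤ) := by
      intro k hk
      obtain ⟨j, rfl⟩ : ∃ j, k = j+1 := ⟨k-1, by omega⟩
      rw [hmem, hscale]
      refine Dvd.dvd.mul_right ?_ _
      rw [hc, ← pow_mul]
      exact pow_dvd_pow _ (le_trans hram (Nat.mul_le_mul_left a (by omega)))
    have hfro : frobNum (localLucasSG P Q p (r : ℤ)) ≤ m := by
      refine csSup_le' ?_
      intro x hx
      by_contra hxm
      exact hx (hallge x (by omega))
    omega
  refine ⟨?_, ?_, ?_, hρ2, ?_, ?_⟩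
  · rw [hmem, lucasU_zero]
    exact dvd_zero _
  · intro m n hm hn
    rw [hmem] at hm hn ⊢
    rcases Nat.eq_zero_or_pos m with h0 | h1
    · simpa [h0] using hn
    obtain ⟨m', rfl⟩ : ∃ m', m = m'+1 := ⟨m-1, by omega⟩
    rw [lucasU_add]
    exact dvd_sub (hm.mul_right _) (hn.mul_left _)
  · refine Set.Finite.subset (Set.finite_Iic r) ?_
    intro n hn
    simp only [Set.mem_Iic]
    by_contra hnr
    apply hn
    obtain ⟨m, rfl⟩ : ∃ m, n = m+1 := ⟨n-1, by omega⟩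
    rw [hmem, hscale]
    refine Dvd.dvd.mul_right ?_ _
    rw [hc, ← pow_mul]
    exact pow_dvd_pow _ (by nlinarith)
  · intro _ n hn
    exact hsmall n hn
  · intro hp2 n hn
    have h2P' : ¬ (2:ℤ) ∣ P' := by rw [hp2] at hP'; exact_mod_cast hP'
    have h2Q' : ¬ (2:ℤ) ∣ Q' := by rw [hp2] at hQ'; exact_mod_cast hQ'
    have hoP : Odd P' := Int.not_even_iff_odd.mp (fun h => h2P' h.two_dvd)
    have hoQ : Odd Q' := Int.not_even_iff_odd.mp (fun h => h2Q' h.two_dvd)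
    have h3 : (p:ℤ) ∣ lucasU P' Q' 3 := by
      rw [lucasU_three, hp2]
      exact_mod_cast (Odd.sub_odd (hoP.pow) hoQ).two_dvd
    have hρle : ρ' ≤ 3 := hρ.2 ⟨by norm_num, h3⟩
    have hρne : ρ' ≠ 2 := by
      intro h
      have hd := hρ.1.2
      rw [h, lucasU_two] at hd
      exact hP' hd
    have hρ3 : ρ' = 3 := by omega
    rw [← hρ3]
    exact hsmall n hn
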